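/- Let T be a thick locally finite tree and let G ≤ Aut(T) be type-distance-transitive. Let x, y be vertices with d(x, y) = k ≥ 1 and let z be a neighbour of y with d(x, z) = k + 1 (so that S_z(x,1) = S_y(x,1)). Let Λ be the image of G(x, y) acting on S_y(x,1), let Λ' be the image of G(x, z) acting on S_y(x,1), and let K be the kernel of the action of G(x, y) on S_y(x,1). Then Λ' ≤ Λ, the index |Λ : Λ'| equals the number of orbits of K on S_x(y,1), and this index divides deg(y) − 1, where deg(y) is the number of neighbours of y. -/

import Mathlib

/-- The pointwise stabilizer of a set of vertices, inside the full symmetric group. -/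
def ptStab {V : Type*} (s : Set V) : Subgroup (Equiv.Perm V) where
  carrier := {g | ∀ v ∈ s, g v = v}
  one_mem' := by intro v _; rfl
  mul_mem' := by
    intro a b ha hb v hv
    simp only [Set.mem_setOf_eq] at *
    rw [Equiv.Perm.mul_apply, hb v hv, ha v hv]
  inv_mem' := by
    intro a ha v hv
    simp only [Set.mem_setOf_eq] at *
    calc a⁻¹ v = a⁻¹ (a v) := by rw [ha v hv]
      _ = v := a.symm_apply_apply v

/-- `G` consists of automorphisms of the graph `T`. -/
def PreservesAdj {V : Type*} (T : SimpleGraph V) (G : Subgroup (Equiv.Perm V)) : Prop :=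
  ∀ g ∈ G, ∀ a b : V, T.Adj a b ↔ T.Adj (g a) (g b)

/-- `G` is `k`-type-distance-transitive. -/
def TypeDistTrans {V : Type*} (T : SimpleGraph V) (G : Subgroup (Equiv.Perm V)) (k : ℕ) : Prop :=
  ∀ x y x' y' : V, T.dist x y = k → T.dist x' y' = k → Even (T.dist x x') →
    ∃ g ∈ G, g x = x' ∧ g y = y'

/-- The tree is thick: every vertex has at least three neighbours. -/
def Thick {V : Type*} (T : SimpleGraph V) : Prop :=
  ∀ v : V, ∃ a b c : V, T.Adj v a ∧ T.Adj v b ∧ T.Adj v c ∧ a ≠ b ∧ a ≠ c ∧ b ≠ c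


open SimpleGraph

private lemma permDist_le {V : Type*} {T : SimpleGraph V} (hconn : T.Connected)
    {g : Equiv.Perm V} (hg : ∀ a b, T.Adj a b ↔ T.Adj (g a) (g b)) (a b : V) :
    T.dist (g a) (g b) ≤ T.dist a b := by
  obtain ⟨p, hp⟩ := hconn.exists_walk_length_eq_dist a b
  have := SimpleGraph.dist_le (p.map ⟨g, fun {u v} h => (hg u v).mp h⟩)
  rwa [SimpleGraph.Walk.length_map, hp] at this

private lemma permDist {V : Type*} {T : SimpleGraph V} (hconn : T.Connected)
    {g : Equiv.Perm V} (hg : ∀ a b, T.Adj a b ↔ T.Adj (g a) (g b)) (a b : V) :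
    T.dist (g a) (g b) = T.dist a b := by
  refine le_antisymm (permDist_le hconn hg a b) ?_
  have hg' : ∀ a b, T.Adj a b ↔ T.Adj (g⁻¹ a) (g⁻¹ b) := by
    intro a b
    rw [hg (g⁻¹ a) (g⁻¹ b)]
    simp
  have := permDist_le hconn hg' (g a) (g b)
  simpa using this

private lemma mem_support_dist {V : Type*} {T : SimpleGraph V} (hconn : T.Connected)
    {a b v : V} (p : T.Walk a b) (hp : p.length = T.dist a b) (hv : v ∈ p.support) :
    T.dist a v + T.dist v b = T.dist a b := by
  classical
  refine le_antisymm ?_ (hconn.dist_triangle)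
  have h1 : T.dist a v ≤ (p.takeUntil v hv).length := SimpleGraph.dist_le _
  have h2 : T.dist v b ≤ (p.dropUntil v hv).length := SimpleGraph.dist_le _
  have h3 : (p.takeUntil v hv).length + (p.dropUntil v hv).length = p.length := by
    rw [← SimpleGraph.Walk.length_append, SimpleGraph.Walk.take_spec]
  omega

private lemma exists_shortest_path {V : Type*} {T : SimpleGraph V} (hconn : T.Connected)
    (a b : V) : ∃ p : T.Walk a b, p.IsPath ∧ p.length = T.dist a b := by
  obtain ⟨p, hp⟩ := hconn.exists_walk_length_eq_dist a b
  exact ⟨p, p.isPath_of_length_eq_dist hp, hp⟩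

private lemma isPath_concat {V : Type*} {T : SimpleGraph V} {a v w : V} {p : T.Walk a v}
    (hp : p.IsPath) (h : T.Adj v w) (hw : w ∉ p.support) : (p.concat h).IsPath := by
  rw [← SimpleGraph.Walk.isPath_reverse_iff, SimpleGraph.Walk.reverse_concat,
    SimpleGraph.Walk.cons_isPath_iff]
  exact ⟨hp.reverse, by rwa [SimpleGraph.Walk.support_reverse, List.mem_reverse]⟩

private lemma toward_unique {V : Type*} {T : SimpleGraph V} (hconn : T.Connected)
    (hacyc : T.IsAcyclic) {x v w w' : V} (h : T.Adj v w) (h' : T.Adj v w')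
    (hw : T.dist x w + 1 = T.dist x v) (hw' : T.dist x w' + 1 = T.dist x v) : w = w' := by
  obtain ⟨p, hp, hpl⟩ := exists_shortest_path hconn x w
  obtain ⟨p', hp', hpl'⟩ := exists_shortest_path hconn x w'
  have hv : v ∉ p.support := by
    intro hv
    have h1 := mem_support_dist hconn p hpl hv
    have h2 : T.dist x v ≤ T.dist x w := by omega
    omega
  have hv' : v ∉ p'.support := by
    intro hv'
    have h1 := mem_support_dist hconn p' hpl' hv'
    have h2 : T.dist x v ≤ T.dist x w' := by omega
    omega
  have hq := hacyc.path_unique ⟨p.concat h.symm, isPath_concat hp h.symm hv⟩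
    ⟨p'.concat h'.symm, isPath_concat hp' h'.symm hv'⟩
  have heq : p.concat h.symm = p'.concat h'.symm := congrArg Subtype.val hq
  have := congrArg (fun r : T.Walk x v => r.reverse.getVert 1) heq
  simpa [SimpleGraph.Walk.reverse_concat, SimpleGraph.Walk.getVert_cons_succ,
    SimpleGraph.Walk.getVert_zero] using this

private lemma dist_adj_away {V : Type*} {T : SimpleGraph V} (hconn : T.Connected)
    (hacyc : T.IsAcyclic) {x v w : V} (h : T.Adj v w)
    (hne : T.dist x w + 1 ≠ T.dist x v) : T.dist x w = T.dist x v + 1 := by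
  have hvw : T.dist v w = 1 := by
    refine le_antisymm ?_ ?_
    · have := SimpleGraph.dist_le (SimpleGraph.Walk.cons h SimpleGraph.Walk.nil)
      simpa using this
    · exact hconn.pos_dist_of_ne h.ne
  have t1 : T.dist x w ≤ T.dist x v + 1 := by
    have := hconn.dist_triangle (u := x) (v := v) (w := w)
    omega
  have t2 : T.dist x v ≤ T.dist x w + 1 := by
    have := hconn.dist_triangle (u := x) (v := w) (w := v)
    have hwv : T.dist w v = 1 := by rwa [SimpleGraph.dist_comm] at hvw
    omega
  have hneq : T.dist x w ≠ T.dist x v := by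
    intro heq
    obtain ⟨p, hp, hpl⟩ := exists_shortest_path hconn x w
    have hv : v ∉ p.support := by
      intro hv
      have h1 := mem_support_dist hconn p hpl hv
      omega
    obtain ⟨p', hp', hpl'⟩ := exists_shortest_path hconn x v
    have hq := hacyc.path_unique ⟨p.concat h.symm, isPath_concat hp h.symm hv⟩ ⟨p', hp'⟩
    have := congrArg (fun r : T.Path x v => (r : T.Walk x v).length) hq
    simp only [SimpleGraph.Walk.length_concat] at this
    omega
  omega

private lemma main_aux {V : Type*} {T : SimpleGraph V} (hconn : T.Connected)
    (hacyc : T.IsAcyclic) (hlf : ∀ v : V, (T.neighborSet v).Finite)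
    {G : Subgroup (Equiv.Perm V)} (hG : PreservesAdj T G)
    (hTDT : ∀ k, TypeDistTrans T G k)
    {x y z : V} {k : ℕ} (hk : 1 ≤ k) (hd : T.dist x y = k)
    (hyz : T.Adj y z) (hxz : T.dist x z = k + 1)
    {H : Subgroup (Equiv.Perm V)} (hH : H = G ⊓ ptStab {x} ⊓ ptStab {y})
    {P : Type*} [Group P] (ρ : ↥H →* P) :
    Subgroup.map ρ ((ptStab {z}).comap H.subtype) ≤ ρ.range ∧
    (Subgroup.map ρ ((ptStab {z}).comap H.subtype)).relIndex ρ.range =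
      {S : Set V | ∃ w : V, (T.Adj y w ∧ T.dist w x = T.dist y x + 1) ∧
        S = {w' : V | ∃ g ∈ MonoidHom.ker ρ, (g : Equiv.Perm V) w = w'}}.ncard ∧
    (Subgroup.map ρ ((ptStab {z}).comap H.subtype)).relIndex ρ.range ∣
      ((T.neighborSet y).ncard - 1) := by
  set Q : Subgroup ↥H := (ptStab {z}).comap H.subtype with hQdef
  set R : Subgroup ↥H := Subgroup.comap ρ (Subgroup.map ρ Q) with hRdef
  -- basic membership facts
  have hmem : ∀ g : ↥H, (↑g : Equiv.Perm V) ∈ G ∧ (↑g : Equiv.Perm V) x = x ∧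
      (↑g : Equiv.Perm V) y = y := by
    intro g
    have h2 : (↑g : Equiv.Perm V) ∈ G ⊓ ptStab {x} ⊓ ptStab {y} := by
      rw [← hH]; exact g.2
    rw [Subgroup.mem_inf, Subgroup.mem_inf] at h2
    exact ⟨h2.1.1, h2.1.2 x rfl, h2.2 y rfl⟩
  have hQmem : ∀ g : ↥H, g ∈ Q ↔ (↑g : Equiv.Perm V) z = z := by
    intro g
    rw [hQdef, Subgroup.mem_comap]
    constructor
    · intro h; exact h z rfl
    · intro h v hv
      rw [Set.mem_singleton_iff] at hv
      subst hv; exact h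
  have hdist : ∀ (g : ↥H) (a b : V),
      T.dist ((↑g : Equiv.Perm V) a) ((↑g : Equiv.Perm V) b) = T.dist a b :=
    fun g a b => permDist hconn (hG _ (hmem g).1) a b
  have hadj : ∀ (g : ↥H) (a b : V), T.Adj a b → T.Adj ((↑g : Equiv.Perm V) a)
      ((↑g : Equiv.Perm V) b) := fun g a b h => (hG _ (hmem g).1 a b).mp h
  have hyx : T.dist y x = k := by rw [SimpleGraph.dist_comm]; exact hd
  -- the set S_x(y,1)
  set Sset : Set V := {w : V | T.Adj y w ∧ T.dist w x = T.dist y x + 1} with hSdef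
  have hSd : ∀ w : V, w ∈ Sset ↔ T.Adj y w ∧ T.dist x w = k + 1 := by
    intro w
    rw [hSdef, Set.mem_setOf_eq, hyx, SimpleGraph.dist_comm]
  have hz : z ∈ Sset := (hSd z).mpr ⟨hyz, hxz⟩
  have hact : ∀ (g : ↥H) (w : V), w ∈ Sset → (↑g : Equiv.Perm V) w ∈ Sset := by
    intro g w hw
    rw [hSd] at hw ⊢
    constructor
    · have := hadj g y w hw.1
      rwa [(hmem g).2.2] at this
    · have := hdist g x w
      rw [(hmem g).2.1] at this
      omega
  have htrans : ∀ w ∈ Sset, ∀ w' ∈ Sset, ∃ g : ↥H, (↑g : Equiv.Perm V) w = w' := by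
    intro w hw w' hw'
    rw [hSd] at hw hw'
    obtain ⟨g, hgG, hgx, hgw⟩ := hTDT (k + 1) x w x w' hw.2 hw'.2
      (by rw [SimpleGraph.dist_self]; exact Even.zero)
    have hgy : g y = y := by
      refine toward_unique hconn hacyc (x := x) (v := w') ?_ hw'.1.symm ?_ ?_
      · have : T.Adj (g y) (g w) := (hG g hgG y w).mp hw.1
        rw [hgw] at this
        exact this.symm
      · have hdg : T.dist (g x) (g y) = T.dist x y := permDist hconn (hG g hgG) x y
        rw [hgx, hd] at hdg
        omega
      · omega
    refine ⟨⟨g, ?_⟩, hgw⟩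
    rw [hH, Subgroup.mem_inf, Subgroup.mem_inf]
    refine ⟨⟨hgG, ?_⟩, ?_⟩
    · intro v hv; rw [Set.mem_singleton_iff] at hv; subst hv; exact hgx
    · intro v hv; rw [Set.mem_singleton_iff] at hv; subst hv; exact hgy
  -- orbits of the kernel
  set orb : V → Set V :=
    fun w => {w' : V | ∃ g ∈ MonoidHom.ker ρ, (g : Equiv.Perm V) w = w'} with horbdef
  have horbmem : ∀ w : V, w ∈ orb w := fun w => ⟨1, one_mem _, by simp⟩
  have horb : ∀ {w w₂ : V}, w₂ ∈ orb w → orb w₂ = orb w := by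
    rintro w w₂ ⟨n, hn, hnw⟩
    ext w'
    rw [horbdef]
    simp only [Set.mem_setOf_eq]
    constructor
    · rintro ⟨m, hm, hmw⟩
      refine ⟨m * n, mul_mem hm hn, ?_⟩
      rw [Subgroup.coe_mul, Equiv.Perm.mul_apply, hnw, hmw]
    · rintro ⟨m, hm, hmw⟩
      refine ⟨m * n⁻¹, mul_mem hm (inv_mem hn), ?_⟩
      rw [Subgroup.coe_mul, Equiv.Perm.mul_apply, ← hnw]
      simp only [InvMemClass.coe_inv, Equiv.Perm.coe_inv, Equiv.symm_apply_apply]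
      exact hmw
  have hQR : Q ≤ R := fun q hq => Subgroup.mem_comap.mpr (Subgroup.mem_map_of_mem ρ hq)
  -- the set of orbits of the kernel on Sset
  set OrbSet : Set (Set V) := {S : Set V | ∃ w : V, w ∈ Sset ∧ S = orb w} with hOrbdef
  -- the bijection H/R ≃ OrbSet
  have f2wd : ∀ a b : ↥H, a⁻¹ * b ∈ R → orb ((↑a : Equiv.Perm V) z) = orb ((↑b : Equiv.Perm V) z) := by
    intro a b hab
    rw [hRdef, Subgroup.mem_comap] at hab
    obtain ⟨q, hq, hρq⟩ := Subgroup.mem_map.mp hab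
    have hn : (a⁻¹ * b) * q⁻¹ ∈ MonoidHom.ker ρ := by
      rw [MonoidHom.mem_ker, map_mul, map_inv, hρq]
      group
    have hm : a * ((a⁻¹ * b) * q⁻¹) * a⁻¹ ∈ MonoidHom.ker ρ :=
      (MonoidHom.normal_ker ρ).conj_mem _ hn a
    have hqz : (↑q : Equiv.Perm V) z = z := (hQmem q).mp hq
    have hbz : (↑b : Equiv.Perm V) z = (↑(a * ((a⁻¹ * b) * q⁻¹) * a⁻¹) : Equiv.Perm V)
        ((↑a : Equiv.Perm V) z) := by
      have hqz' : ((↑q : Equiv.Perm V))⁻¹ z = z := by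
        rw [← hqz, Equiv.Perm.coe_inv, Equiv.symm_apply_apply, hqz]
      simp only [Subgroup.coe_mul, InvMemClass.coe_inv, Equiv.Perm.mul_apply,
        Equiv.Perm.coe_inv, Equiv.symm_apply_apply, Equiv.apply_symm_apply,
          (show (↑q : Equiv.Perm V).symm z = z from hqz')]
    refine (horb ?_).symm
    exact ⟨_, hm, hbz.symm⟩
  have hOrbSet_eq : OrbSet = {S : Set V | ∃ w : V, (T.Adj y w ∧ T.dist w x = T.dist y x + 1) ∧
      S = {w' : V | ∃ g ∈ MonoidHom.ker ρ, (g : Equiv.Perm V) w = w'}} := rfl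
  let f2 : ↥H → ↥OrbSet := fun g =>
    ⟨orb ((↑g : Equiv.Perm V) z), by rw [hOrbdef]; exact ⟨_, hact g z hz, rfl⟩⟩
  have hwd2 : ∀ a b : ↥H, (QuotientGroup.leftRel R) a b → f2 a = f2 b := by
    intro a b hab
    rw [QuotientGroup.leftRel_apply] at hab
    exact Subtype.ext (f2wd a b hab)
  let F2 : (↥H ⧸ R) → ↥OrbSet := Quotient.lift f2 hwd2
  have hF2bij : Function.Bijective F2 := by
    constructor
    · intro qa qb
      obtain ⟨a, rfl⟩ := Quotient.exists_rep qa
      obtain ⟨b, rfl⟩ := Quotient.exists_rep qb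
      intro h
      have horbeq : orb ((↑a : Equiv.Perm V) z) = orb ((↑b : Equiv.Perm V) z) :=
        congrArg Subtype.val h
      have hbz : (↑b : Equiv.Perm V) z ∈ orb ((↑a : Equiv.Perm V) z) :=
        horbeq ▸ horbmem _
      obtain ⟨m, hm, hmz⟩ := hbz
      have hqQ : a⁻¹ * m⁻¹ * b ∈ Q := by
        rw [hQmem]
        simp only [Subgroup.coe_mul, InvMemClass.coe_inv, Equiv.Perm.mul_apply]
        rw [← hmz]
        simp
      refine Quotient.sound (QuotientGroup.leftRel_apply.mpr ?_)
      rw [hRdef, Subgroup.mem_comap]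
      refine Subgroup.mem_map.mpr ⟨_, hqQ, ?_⟩
      have hm1 : ρ m = 1 := MonoidHom.mem_ker.mp hm
      simp [map_mul, map_inv, hm1]
    · rintro ⟨S, hS⟩
      rw [hOrbdef] at hS
      obtain ⟨w, hw, rfl⟩ := hS
      obtain ⟨g, hgz⟩ := htrans z hz w hw
      refine ⟨Quotient.mk _ g, Subtype.ext ?_⟩
      show orb ((↑g : Equiv.Perm V) z) = orb w
      rw [hgz]
  -- the bijection H/Q ≃ Sset
  let f3 : ↥H → ↥Sset := fun g => ⟨(↑g : Equiv.Perm V) z, hact g z hz⟩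
  have hwd3 : ∀ a b : ↥H, (QuotientGroup.leftRel Q) a b → f3 a = f3 b := by
    intro a b hab
    rw [QuotientGroup.leftRel_apply] at hab
    have := (hQmem _).mp hab
    simp only [Subgroup.coe_mul, InvMemClass.coe_inv, Equiv.Perm.mul_apply] at this
    apply Subtype.ext
    show (↑a : Equiv.Perm V) z = (↑b : Equiv.Perm V) z
    conv_lhs => rw [← this]
    simp
  let F3 : (↥H ⧸ Q) → ↥Sset := Quotient.lift f3 hwd3
  have hF3bij : Function.Bijective F3 := by
    constructor
    · intro qa qb
      obtain ⟨a, rfl⟩ := Quotient.exists_rep qa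
      obtain ⟨b, rfl⟩ := Quotient.exists_rep qb
      intro h
      have hzeq : (↑a : Equiv.Perm V) z = (↑b : Equiv.Perm V) z := congrArg Subtype.val h
      refine Quotient.sound (QuotientGroup.leftRel_apply.mpr ?_)
      rw [hQmem]
      simp only [Subgroup.coe_mul, InvMemClass.coe_inv, Equiv.Perm.mul_apply]
      rw [← hzeq]
      simp
    · rintro ⟨w, hw⟩
      obtain ⟨g, hgz⟩ := htrans z hz w hw
      exact ⟨Quotient.mk _ g, Subtype.ext hgz⟩
  -- cardinality of Sset
  have hSsetcard : Sset.ncard = (T.neighborSet y).ncard - 1 := by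
    obtain ⟨p, hpl⟩ := hconn.exists_walk_length_eq_dist y x
    have hplk : p.length = k := by rw [hpl, hyx]
    set u := p.getVert 1 with hu
    have hadjyu : T.Adj y u := by
      have := p.adj_getVert_succ (i := 0) (by omega)
      simpa [SimpleGraph.Walk.getVert_zero] using this
    have humem : u ∈ p.support :=
      SimpleGraph.Walk.mem_support_iff_exists_getVert.mpr ⟨1, rfl, by omega⟩
    have hsum := mem_support_dist hconn p hpl humem
    have hyu : T.dist y u = 1 := by
      refine le_antisymm ?_ ?_
      · simpa using SimpleGraph.dist_le (SimpleGraph.Walk.cons hadjyu SimpleGraph.Walk.nil)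
      · exact hconn.pos_dist_of_ne hadjyu.ne
    have hux : T.dist x u + 1 = k := by
      rw [SimpleGraph.dist_comm]
      omega
    have hSeq : Sset = T.neighborSet y \ {u} := by
      ext w
      rw [hSd, Set.mem_diff, Set.mem_singleton_iff, SimpleGraph.mem_neighborSet]
      constructor
      · rintro ⟨h1, h2⟩
        refine ⟨h1, ?_⟩
        rintro rfl
        omega
      · rintro ⟨h1, h2⟩
        refine ⟨h1, ?_⟩
        have hne : T.dist x w + 1 ≠ T.dist x y := by
          intro hcon
          exact h2 (toward_unique hconn hacyc (x := x) h1 hadjyu (by omega) (by omega))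
        have := dist_adj_away hconn hacyc h1 hne
        omega
    rw [hSeq, Set.ncard_diff_singleton_of_mem ((SimpleGraph.mem_neighborSet T y u).mpr hadjyu)]
  refine ⟨?_, ?_, ?_⟩
  · rintro s ⟨g, hg, rfl⟩
    exact ⟨g, rfl⟩
  · rw [← hOrbSet_eq, ← Subgroup.index_comap, ← hRdef, Subgroup.index_eq_card,
      Nat.card_congr (Equiv.ofBijective F2 hF2bij), Nat.card_coe_set_eq]
  · rw [← Subgroup.index_comap, ← hRdef]
    have hdvd : R.index ∣ Q.index := Subgroup.index_dvd_of_le hQR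
    have hQind : Q.index = (T.neighborSet y).ncard - 1 := by
      rw [Subgroup.index_eq_card, Nat.card_congr (Equiv.ofBijective F3 hF3bij),
        Nat.card_coe_set_eq, hSsetcard]
    rwa [hQind] at hdvd


/-- Let `G` be a type-distance-transitive group of automorphisms of a
thick locally finite tree, let `d(x,y) = k ≥ 1`, let `z` be a neighbour of `y` with
`d(x,z) = k+1`, let `Λ` (resp. `Λ'`) be the image of `G(x,y)` (resp. `G(x,z)`) acting on
`S_y(x,1)` and let `K` be the kernel of the action of `G(x,y)` on `S_y(x,1)`.  Then
`Λ' ≤ Λ`, the index `|Λ : Λ'|` equals the number of orbits of `K` on `S_x(y,1)`, and this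
index divides `deg(y) − 1`. -/
theorem index_of_extended_segment_stabilizer
    {V : Type*} (T : SimpleGraph V) (hconn : T.Connected) (hacyc : T.IsAcyclic)
    (hthick : Thick T) (hlf : ∀ v : V, (T.neighborSet v).Finite)
    (G : Subgroup (Equiv.Perm V)) (hG : PreservesAdj T G)
    (hTDT : ∀ k, TypeDistTrans T G k)
    (x y z : V) (k : ℕ) (hk : 1 ≤ k) (hd : T.dist x y = k)
    (hyz : T.Adj y z) (hxz : T.dist x z = k + 1)
    (ρ : ↥(G ⊓ ptStab {x} ⊓ ptStab {y}) →*
        Equiv.Perm {w : V // T.Adj x w ∧ T.dist w y = T.dist x y + 1})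
    (hρ : ∀ (g : ↥(G ⊓ ptStab {x} ⊓ ptStab {y}))
        (w : {w : V // T.Adj x w ∧ T.dist w y = T.dist x y + 1}),
        ((ρ g) w : V) = (g : Equiv.Perm V) (w : V)) :
    Subgroup.map ρ ((ptStab {z}).comap (G ⊓ ptStab {x} ⊓ ptStab {y}).subtype) ≤ ρ.range ∧
    (Subgroup.map ρ ((ptStab {z}).comap (G ⊓ ptStab {x} ⊓ ptStab {y}).subtype)).relIndex
        ρ.range =
      {S : Set V | ∃ w : V, (T.Adj y w ∧ T.dist w x = T.dist y x + 1) ∧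
        S = {w' : V | ∃ g ∈ MonoidHom.ker ρ, (g : Equiv.Perm V) w = w'}}.ncard ∧
    (Subgroup.map ρ ((ptStab {z}).comap (G ⊓ ptStab {x} ⊓ ptStab {y}).subtype)).relIndex
        ρ.range ∣ ((T.neighborSet y).ncard - 1) :=
  main_aux hconn hacyc hlf hG hTDT hk hd hyz hxz rfl ρ
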